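/- Let f be a measurable regressor with E[(f(X)−Y)²] < ∞, r_f its induced rejector, and f* = f̄, r*(x) = 1{R(f*,x) ≤ c}. Then the excess RwR risk of the pair (f, r_f) is bounded by the squared prediction error: 0 ≤ L_RwR(f, r_f) − L_RwR(f*, r*) ≤ E[(f(X) − f*(X))²]. -/

import Mathlib

open MeasureTheory Filter

noncomputable section

/-- The regression-with-rejection (RwR) loss
`L_RwR(f,r) = E[ r(X)·(f(X)−Y)² + (1−r(X))·c ]`. -/
def LRwR {Ω : Type*} [MeasurableSpace Ω] {d : ℕ} (μ : Measure Ω)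
    (X : Ω → EuclideanSpace ℝ (Fin d)) (Y : Ω → ℝ) (c : ℝ)
    (f r : EuclideanSpace ℝ (Fin d) → ℝ) : ℝ :=
  ∫ ω, r (X ω) * (f (X ω) - Y ω) ^ 2 + (1 - r (X ω)) * c ∂μ

/-- `g : 𝒳 → ℝ` is a measurable version of the conditional expectation
`E[Z | X]`, i.e. `g(X) = E[Z | σ(X)]` a.s. -/
def IsCondMean {Ω : Type*} [MeasurableSpace Ω] {d : ℕ} (μ : Measure Ω)
    (X : Ω → EuclideanSpace ℝ (Fin d)) (Z : Ω → ℝ)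
    (g : EuclideanSpace ℝ (Fin d) → ℝ) : Prop :=
  (fun ω => g (X ω)) =ᵐ[μ] μ[Z | MeasurableSpace.comap X inferInstance]

/-- Representation of the RwR loss with induced rejector as `∫ min (R (X ω)) c`. -/
lemma LRwR_eq_min {Ω : Type*} [MeasurableSpace Ω] {d : ℕ}
    (μ : Measure Ω) [IsProbabilityMeasure μ]
    (X : Ω → EuclideanSpace ℝ (Fin d)) (Y : Ω → ℝ)
    (hX : Measurable X) (c : ℝ)
    (g : EuclideanSpace ℝ (Fin d) → ℝ)
    (hg2 : Integrable (fun ω => (g (X ω) - Y ω) ^ 2) μ)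
    (R : EuclideanSpace ℝ (Fin d) → ℝ) (hR_m : Measurable R)
    (hR : IsCondMean μ X (fun ω => (g (X ω) - Y ω) ^ 2) R) :
    LRwR μ X Y c g (fun x => if R x ≤ c then 1 else 0)
      = ∫ ω, min (R (X ω)) c ∂μ := by
  have hm : MeasurableSpace.comap X inferInstance ≤ ‹MeasurableSpace Ω› := hX.comap_le
  have hRX_int : Integrable (fun ω => R (X ω)) μ := integrable_condExp.congr hR.symm
  set A : Set Ω := {ω | R (X ω) ≤ c} with hA_def
  have hA : MeasurableSet[MeasurableSpace.comap X inferInstance] A := ⟨{x | R x ≤ c}, measurableSet_le hR_m measurable_const, rfl⟩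
  have hA0 : MeasurableSet A := hm _ hA
  have h1 : (fun ω => (if R (X ω) ≤ c then (1:ℝ) else 0) * (g (X ω) - Y ω) ^ 2
      + (1 - if R (X ω) ≤ c then (1:ℝ) else 0) * c)
      = fun ω => A.indicator (fun ω => (g (X ω) - Y ω) ^ 2) ω
        + Aᶜ.indicator (fun _ => c) ω := by
    funext ω
    by_cases h : R (X ω) ≤ c <;>
      simp [Set.indicator, hA_def, h]
  have h2 : (fun ω => min (R (X ω)) c)
      = fun ω => A.indicator (fun ω => R (X ω)) ω + Aᶜ.indicator (fun _ => c) ω := by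
    funext ω
    by_cases h : R (X ω) ≤ c
    · simp [Set.indicator, hA_def, h, min_eq_left h]
    · simp [Set.indicator, hA_def, h, min_eq_right (le_of_not_ge h)]
  have hsetA : ∫ ω in A, (g (X ω) - Y ω) ^ 2 ∂μ = ∫ ω in A, R (X ω) ∂μ := by
    rw [← setIntegral_condExp hm hg2 hA]
    exact (setIntegral_congr_ae hA0 (hR.mono fun ω h _ => h)).symm
  rw [LRwR, h1, h2,
    integral_add (hg2.indicator hA0) ((integrable_const c).indicator hA0.compl),
    integral_add (hRX_int.indicator hA0) ((integrable_const c).indicator hA0.compl),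
    integral_indicator hA0, integral_indicator hA0, hsetA]

theorem stmt15 {Ω : Type*} [MeasurableSpace Ω] {d : ℕ}
    (μ : Measure Ω) [IsProbabilityMeasure μ]
    (X : Ω → EuclideanSpace ℝ (Fin d)) (Y : Ω → ℝ)
    (hX : Measurable X) (hY : Measurable Y)
    (hY2 : Integrable (fun ω => (Y ω) ^ 2) μ)
    (c : ℝ) (hc : 0 < c)
    (fstar : EuclideanSpace ℝ (Fin d) → ℝ) (hfstar_m : Measurable fstar)
    (hfstar : IsCondMean μ X Y fstar)
    (hfstar2 : Integrable (fun ω => (fstar (X ω) - Y ω) ^ 2) μ)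
    (Rstar : EuclideanSpace ℝ (Fin d) → ℝ) (hRstar_m : Measurable Rstar)
    (hRstar : IsCondMean μ X (fun ω => (fstar (X ω) - Y ω) ^ 2) Rstar)
    (f : EuclideanSpace ℝ (Fin d) → ℝ) (hf : Measurable f)
    (hf2 : Integrable (fun ω => (f (X ω) - Y ω) ^ 2) μ)
    (hdiff2 : Integrable (fun ω => (f (X ω) - fstar (X ω)) ^ 2) μ)
    (Rf : EuclideanSpace ℝ (Fin d) → ℝ) (hRf_m : Measurable Rf)
    (hRf : IsCondMean μ X (fun ω => (f (X ω) - Y ω) ^ 2) Rf) :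
    0 ≤ LRwR μ X Y c f (fun x => if Rf x ≤ c then 1 else 0)
        - LRwR μ X Y c fstar (fun x => if Rstar x ≤ c then 1 else 0) ∧
    LRwR μ X Y c f (fun x => if Rf x ≤ c then 1 else 0)
        - LRwR μ X Y c fstar (fun x => if Rstar x ≤ c then 1 else 0)
      ≤ ∫ ω, (f (X ω) - fstar (X ω)) ^ 2 ∂μ := by
  have hm : MeasurableSpace.comap X inferInstance ≤ ‹MeasurableSpace Ω› := hX.comap_le
  have hXm : Measurable[MeasurableSpace.comap X inferInstance] X :=
    Measurable.of_comap_le le_rfl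
  -- integrability facts
  have hY_int : Integrable Y μ := by
    refine Integrable.mono' (hY2.add (integrable_const 1)) hY.aestronglyMeasurable
      (Eventually.of_forall fun ω => ?_)
    rw [Real.norm_eq_abs]
    show |Y ω| ≤ Y ω ^ 2 + 1
    nlinarith [sq_abs (Y ω), sq_nonneg (|Y ω| - 1)]
  have hfstarX_int : Integrable (fun ω => fstar (X ω)) μ :=
    integrable_condExp.congr hfstar.symm
  have hψ_int : Integrable (fun ω => fstar (X ω) - Y ω) μ := hfstarX_int.sub hY_int
  have hφ_sm : StronglyMeasurable[MeasurableSpace.comap X inferInstance]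
      (fun ω => 2 * (f (X ω) - fstar (X ω))) :=
    ((measurable_const.mul ((hf.sub hfstar_m).comp hXm))).stronglyMeasurable
  have hD_sm : StronglyMeasurable[MeasurableSpace.comap X inferInstance]
      (fun ω => (f (X ω) - fstar (X ω)) ^ 2) :=
    (((hf.sub hfstar_m).comp hXm).pow measurable_const).stronglyMeasurable
  have hC_int : Integrable
      ((fun ω => 2 * (f (X ω) - fstar (X ω))) * fun ω => fstar (X ω) - Y ω) μ := by
    refine Integrable.mono' (hdiff2.add hfstar2)
      ((hφ_sm.mono hm).aestronglyMeasurable.mul hψ_int.aestronglyMeasurable)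
      (Eventually.of_forall fun ω => ?_)
    simp only [Pi.mul_apply, Real.norm_eq_abs, abs_mul, abs_two]
    show 2 * |f (X ω) - fstar (X ω)| * |fstar (X ω) - Y ω|
      ≤ (f (X ω) - fstar (X ω)) ^ 2 + (fstar (X ω) - Y ω) ^ 2
    nlinarith [sq_nonneg (|f (X ω) - fstar (X ω)| - |fstar (X ω) - Y ω|),
      sq_abs (f (X ω) - fstar (X ω)), sq_abs (fstar (X ω) - Y ω),
      abs_nonneg (f (X ω) - fstar (X ω)), abs_nonneg (fstar (X ω) - Y ω)]
  -- conditional expectation of fstar X - Y is 0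
  have hψ0 : μ[(fun ω => fstar (X ω) - Y ω) | MeasurableSpace.comap X inferInstance]
      =ᵐ[μ] 0 := by
    refine (condExp_sub hfstarX_int hY_int _).trans ?_
    have h1 : μ[(fun ω => fstar (X ω)) | MeasurableSpace.comap X inferInstance]
        = fun ω => fstar (X ω) :=
      condExp_of_stronglyMeasurable hm ((hfstar_m.comp hXm)).stronglyMeasurable hfstarX_int
    rw [h1]
    filter_upwards [hfstar] with ω hω
    simp [← hω]
  -- key decomposition : Rf ∘ X =ᵐ Rstar ∘ X + (f - fstar)² ∘ X
  have hadd : (fun ω => Rf (X ω)) =ᵐ[μ]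
      fun ω => Rstar (X ω) + (f (X ω) - fstar (X ω)) ^ 2 := by
    have hWeq : (fun ω => (f (X ω) - Y ω) ^ 2)
        = (fun ω => (fstar (X ω) - Y ω) ^ 2 +
            ((fun ω => 2 * (f (X ω) - fstar (X ω))) * fun ω => fstar (X ω) - Y ω) ω)
          + fun ω => (f (X ω) - fstar (X ω)) ^ 2 := by
      funext ω; simp only [Pi.add_apply, Pi.mul_apply]; ring
    have hCE : μ[(fun ω => (f (X ω) - Y ω) ^ 2) | MeasurableSpace.comap X inferInstance]
        =ᵐ[μ] fun ω => Rstar (X ω) + (f (X ω) - fstar (X ω)) ^ 2 := by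
      rw [hWeq]
      refine (condExp_add (hfstar2.add hC_int) hdiff2 _).trans ?_
      have hD : μ[(fun ω => (f (X ω) - fstar (X ω)) ^ 2) |
          MeasurableSpace.comap X inferInstance] = fun ω => (f (X ω) - fstar (X ω)) ^ 2 :=
        condExp_of_stronglyMeasurable hm hD_sm hdiff2
      have hCmul := condExp_mul_of_stronglyMeasurable_left hφ_sm hC_int hψ_int
      have hsum := condExp_add hfstar2 hC_int (MeasurableSpace.comap X inferInstance)
      filter_upwards [hsum, hCmul, hψ0, hRstar] with ω h1 h2 h3 h4
      simp only [Pi.add_apply] at h1 ⊢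
      rw [hD, h1]
      simp only [Pi.add_apply]
      rw [h2]
      simp only [Pi.mul_apply, h3, Pi.zero_apply, mul_zero, ← h4]
      ring
    exact hRf.trans hCE
  -- rewrite both losses
  rw [LRwR_eq_min μ X Y hX c f hf2 Rf hRf_m hRf,
    LRwR_eq_min μ X Y hX c fstar hfstar2 Rstar hRstar_m hRstar]
  have hRfX_int : Integrable (fun ω => Rf (X ω)) μ := integrable_condExp.congr hRf.symm
  have hRsX_int : Integrable (fun ω => Rstar (X ω)) μ := integrable_condExp.congr hRstar.symm
  have hmin_int : ∀ (h : Ω → ℝ), Measurable h → Integrable h μ →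
      Integrable (fun ω => min (h ω) c) μ := by
    intro h hhm hh
    refine Integrable.mono' (hh.abs.add (integrable_const |c|))
      ((hhm.min measurable_const)).aestronglyMeasurable
      (Eventually.of_forall fun ω => ?_)
    rw [Real.norm_eq_abs]
    rcases le_total (h ω) c with h' | h' <;>
      simp [min_eq_left, min_eq_right, h'] <;>
      cases abs_cases (h ω) <;> cases abs_cases c <;> linarith [abs_nonneg (h ω), abs_nonneg c]
  have hf_min := hmin_int (fun ω => Rf (X ω)) (hRf_m.comp hX) hRfX_int
  have hs_min := hmin_int (fun ω => Rstar (X ω)) (hRstar_m.comp hX) hRsX_int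
  rw [← integral_sub hf_min hs_min]
  have hbound : ∀ᵐ ω ∂μ, 0 ≤ min (Rf (X ω)) c - min (Rstar (X ω)) c ∧
      min (Rf (X ω)) c - min (Rstar (X ω)) c ≤ (f (X ω) - fstar (X ω)) ^ 2 := by
    filter_upwards [hadd] with ω hω
    rw [hω]
    have hd : 0 ≤ (f (X ω) - fstar (X ω)) ^ 2 := sq_nonneg _
    constructor <;> · simp only [min_def]; split_ifs <;> linarith
  constructor
  · exact integral_nonneg_of_ae (hbound.mono fun ω h => h.1)
  · exact integral_mono_ae (hf_min.sub hs_min) hdiff2 (hbound.mono fun ω h => h.2)
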